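/- Let K, M ⊆ ℝ^d be nonempty compact convex sets with K ∪ M convex, let E be a closed convex set with unique nearest points p(K, E), p(M, E), p(K ∪ M, E), p(K ∩ M, E) as appropriate. Then the multiset of pairs {(d(K ∪ M, E), p(K ∪ M, E)), (d(K ∩ M, E), p(K ∩ M, E))} equals the multiset {(d(K, E), p(K, E)), (d(M, E), p(M, E))}. In particular, for any predicate Q on distance–point pairs, 1{Q(K ∪ M, E)} + 1{Q(K ∩ M, E)} = 1{Q(K, E)} + 1{Q(M, E)}. -/
import Mathlib

noncomputable section

open scoped Classical

/-- The distance `d(K, E) = inf{‖x − y‖ : x ∈ K, y ∈ E}` between two sets. -/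
def setDist {d : ℕ} (K E : Set (EuclideanSpace ℝ (Fin d))) : ℝ :=
  sInf (Set.image2 dist K E)

/-- `x` is the unique nearest point of `K` to `E`. -/
def IsUniqueNearestPoint {d : ℕ} (K E : Set (EuclideanSpace ℝ (Fin d)))
    (x : EuclideanSpace ℝ (Fin d)) : Prop :=
  x ∈ K ∧ Metric.infDist x E = setDist K E ∧
    ∀ y ∈ K, Metric.infDist y E = setDist K E → y = x

section Aux

variable {d : ℕ}

lemma bddBelow_image2_dist (K E : Set (EuclideanSpace ℝ (Fin d))) :
    BddBelow (Set.image2 dist K E) := by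
  refine ⟨0, ?_⟩
  rintro z ⟨x, hx, y, hy, rfl⟩
  exact dist_nonneg

lemma setDist_le_infDist {K E : Set (EuclideanSpace ℝ (Fin d))}
    {x : EuclideanSpace ℝ (Fin d)} (hx : x ∈ K) :
    setDist K E ≤ Metric.infDist x E := by
  rcases E.eq_empty_or_nonempty with rfl | hE
  · simp [setDist]
  · refine le_of_not_gt fun h => ?_
    obtain ⟨y, hy, hlt⟩ := (Metric.infDist_lt_iff hE).mp h
    exact (csInf_le (bddBelow_image2_dist K E) (Set.mem_image2_of_mem hx hy)).not_gt hlt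

lemma setDist_anti {K K' E : Set (EuclideanSpace ℝ (Fin d))}
    (hKne : K.Nonempty) (h : K ⊆ K') : setDist K' E ≤ setDist K E := by
  rcases E.eq_empty_or_nonempty with rfl | hE
  · simp [setDist]
  · exact csInf_le_csInf (bddBelow_image2_dist _ _) (hKne.image2 hE)
      (Set.image2_subset h subset_rfl)

lemma infDist_convex_comb {E : Set (EuclideanSpace ℝ (Fin d))} (hE : E.Nonempty)
    (hEconv : Convex ℝ E) {x y : EuclideanSpace ℝ (Fin d)} {a b : ℝ}
    (ha : 0 ≤ a) (hb : 0 ≤ b) (hab : a + b = 1) :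
    Metric.infDist (a • x + b • y) E ≤
      a * Metric.infDist x E + b * Metric.infDist y E := by
  refine le_of_forall_pos_le_add fun ε hε => ?_
  obtain ⟨e₁, he₁, hd₁⟩ := (Metric.infDist_lt_iff hE).mp
    (lt_add_of_pos_right (Metric.infDist x E) (half_pos hε))
  obtain ⟨e₂, he₂, hd₂⟩ := (Metric.infDist_lt_iff hE).mp
    (lt_add_of_pos_right (Metric.infDist y E) (half_pos hε))
  have hmem : a • e₁ + b • e₂ ∈ E := hEconv he₁ he₂ ha hb hab
  have h1 : Metric.infDist (a • x + b • y) E ≤ dist (a • x + b • y) (a • e₁ + b • e₂) :=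
    Metric.infDist_le_dist_of_mem hmem
  have h2 : dist (a • x + b • y) (a • e₁ + b • e₂) ≤ a * dist x e₁ + b * dist y e₂ := by
    rw [dist_eq_norm, dist_eq_norm, dist_eq_norm]
    have hrw : a • x + b • y - (a • e₁ + b • e₂) = a • (x - e₁) + b • (y - e₂) := by
      module
    rw [hrw]
    calc ‖a • (x - e₁) + b • (y - e₂)‖ ≤ ‖a • (x - e₁)‖ + ‖b • (y - e₂)‖ := norm_add_le _ _
      _ = a * ‖x - e₁‖ + b * ‖y - e₂‖ := by
          rw [norm_smul, norm_smul, Real.norm_of_nonneg ha, Real.norm_of_nonneg hb]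
  have h3 : a * dist x e₁ ≤ a * (Metric.infDist x E + ε / 2) :=
    mul_le_mul_of_nonneg_left hd₁.le ha
  have h4 : b * dist y e₂ ≤ b * (Metric.infDist y E + ε / 2) :=
    mul_le_mul_of_nonneg_left hd₂.le hb
  nlinarith [h1, h2, h3, h4]

lemma foot_mem {K M E : Set (EuclideanSpace ℝ (Fin d))}
    (hKc : IsClosed K) (hUconv : Convex ℝ (K ∪ M)) (hE : E.Nonempty)
    (hEconv : Convex ℝ E) {pU pM : EuclideanSpace ℝ (Fin d)}
    (hpU : IsUniqueNearestPoint (K ∪ M) E pU)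
    (hpM : IsUniqueNearestPoint M E pM)
    (hpUK : pU ∈ K) : pM ∈ K := by
  by_cases hPM : pM ∈ K
  · exact hPM
  by_cases hup : pU = pM
  · exact hup ▸ hpUK
  exfalso
  set γ : ℝ → EuclideanSpace ℝ (Fin d) := fun t => (1 - t) • pU + t • pM with hγ
  have hγmem : ∀ t ∈ Set.Icc (0:ℝ) 1, γ t ∈ K ∪ M := fun t ht =>
    hUconv (Or.inl hpUK) (Or.inr hpM.1) (by linarith [ht.2]) ht.1 (by ring)
  have hγcont : Continuous γ := by fun_prop
  set A : Set ℝ := Set.Icc (0:ℝ) 1 ∩ γ ⁻¹' K with hA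
  have hA0 : (0:ℝ) ∈ A := ⟨⟨le_refl 0, zero_le_one⟩, by simp [γ, hpUK]⟩
  have hAc : IsCompact A := isCompact_Icc.inter_right (hKc.preimage hγcont)
  set t₀ : ℝ := sSup A with ht₀
  have htA : t₀ ∈ A := hAc.sSup_mem ⟨0, hA0⟩
  have ht0 : 0 ≤ t₀ := htA.1.1
  have ht1 : t₀ ≤ 1 := htA.1.2
  by_cases he1 : t₀ = 1
  · have : γ 1 ∈ K := he1 ▸ htA.2
    simp [γ] at this
    exact hPM this
  have hlt : t₀ < 1 := lt_of_le_of_ne ht1 he1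
  set t₁ : ℝ := (t₀ + 1) / 2 with ht₁
  have h01 : t₀ < t₁ := by rw [ht₁]; linarith
  have h11 : t₁ < 1 := by rw [ht₁]; linarith
  have h00 : 0 ≤ t₁ := by rw [ht₁]; linarith
  have hnotK : γ t₁ ∉ K := by
    intro h
    have : t₁ ≤ t₀ := le_csSup ⟨1, fun t ht => ht.1.2⟩ ⟨⟨h00, h11.le⟩, h⟩
    linarith
  have hMem : γ t₁ ∈ M := (hγmem t₁ ⟨h00, h11.le⟩).resolve_left hnotK
  have hdUM : setDist (K ∪ M) E ≤ setDist M E :=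
    setDist_anti ⟨pM, hpM.1⟩ Set.subset_union_right
  have h1 : Metric.infDist (γ t₁) E ≤ setDist M E := by
    have hcv := infDist_convex_comb hE hEconv (x := pU) (y := pM)
      (a := 1 - t₁) (b := t₁) (by linarith) h00 (by ring)
    rw [hpU.2.1, hpM.2.1] at hcv
    have h2 : (1 - t₁) * setDist (K ∪ M) E ≤ (1 - t₁) * setDist M E :=
      mul_le_mul_of_nonneg_left hdUM (by linarith)
    calc Metric.infDist (γ t₁) E
        ≤ (1 - t₁) * setDist (K ∪ M) E + t₁ * setDist M E := hcv
      _ ≤ setDist M E := by nlinarith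
  have h2 : setDist M E ≤ Metric.infDist (γ t₁) E := setDist_le_infDist hMem
  have heq : γ t₁ = pM := hpM.2.2 _ hMem (le_antisymm h1 h2)
  have h4 : (1 - t₁) • (pU - pM) = ((1 - t₁) • pU + t₁ • pM) - pM := by module
  rw [show (1 - t₁) • pU + t₁ • pM = γ t₁ from rfl, heq, sub_self] at h4
  rcases smul_eq_zero.mp h4 with h | h
  · exact absurd h (by intro h'; linarith [h'])
  · exact hup (sub_eq_zero.mp h)

lemma main_case {K M E : Set (EuclideanSpace ℝ (Fin d))}
    (hKc : IsClosed K) (hUconv : Convex ℝ (K ∪ M)) (hE : E.Nonempty)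
    (hEconv : Convex ℝ E) {pK pM pU pI : EuclideanSpace ℝ (Fin d)}
    (hpK : IsUniqueNearestPoint K E pK) (hpM : IsUniqueNearestPoint M E pM)
    (hpU : IsUniqueNearestPoint (K ∪ M) E pU)
    (hpI : IsUniqueNearestPoint (K ∩ M) E pI)
    (hpUK : pU ∈ K) :
    setDist (K ∪ M) E = setDist K E ∧ pU = pK ∧
      setDist (K ∩ M) E = setDist M E ∧ pI = pM := by
  have hdU : setDist (K ∪ M) E = setDist K E :=
    le_antisymm (setDist_anti ⟨pK, hpK.1⟩ Set.subset_union_left)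
      ((setDist_le_infDist hpUK).trans (le_of_eq hpU.2.1))
  have hpKU : pU = pK := hpK.2.2 pU hpUK (hpU.2.1.trans hdU)
  have hfM : pM ∈ K := foot_mem hKc hUconv hE hEconv hpU hpM hpUK
  have hmemI : pM ∈ K ∩ M := ⟨hfM, hpM.1⟩
  have hdI : setDist (K ∩ M) E = setDist M E :=
    le_antisymm ((setDist_le_infDist hmemI).trans (le_of_eq hpM.2.1))
      (setDist_anti ⟨pM, hmemI⟩ Set.inter_subset_right)
  have hpIM : pI = pM := (hpI.2.2 pM hmemI (hpM.2.1.trans hdI.symm)).symm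
  exact ⟨hdU, hpKU, hdI, hpIM⟩

end Aux

/-- For `K, M` nonempty compact convex with `K ∪ M` convex and `E` closed and
convex with unique nearest points in `K`, `M`, `K ∪ M` and `K ∩ M`, the
multiset of distance–foot-point pairs of `K ∪ M` and `K ∩ M` coincides with that
of `K` and `M`; in particular indicator sums of any predicate on such pairs
agree. -/
theorem stmt_7 (d : ℕ) (K M E : Set (EuclideanSpace ℝ (Fin d)))
    (hKc : IsCompact K) (hKne : K.Nonempty) (hKconv : Convex ℝ K)
    (hMc : IsCompact M) (hMne : M.Nonempty) (hMconv : Convex ℝ M)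
    (hUconv : Convex ℝ (K ∪ M))
    (hEc : IsClosed E) (hEconv : Convex ℝ E)
    (pK pM pU pI : EuclideanSpace ℝ (Fin d))
    (hpK : IsUniqueNearestPoint K E pK) (hpM : IsUniqueNearestPoint M E pM)
    (hpU : IsUniqueNearestPoint (K ∪ M) E pU)
    (hpI : IsUniqueNearestPoint (K ∩ M) E pI) :
    ({(setDist (K ∪ M) E, pU), (setDist (K ∩ M) E, pI)} :
        Multiset (ℝ × EuclideanSpace ℝ (Fin d))) =
      {(setDist K E, pK), (setDist M E, pM)} ∧
    ∀ Q : ℝ × EuclideanSpace ℝ (Fin d) → Prop,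
      ((if Q (setDist (K ∪ M) E, pU) then (1 : ℕ) else 0) +
          (if Q (setDist (K ∩ M) E, pI) then 1 else 0)) =
        ((if Q (setDist K E, pK) then 1 else 0) +
          (if Q (setDist M E, pM) then 1 else 0)) := by
  rcases E.eq_empty_or_nonempty with rfl | hE
  · have hz : ∀ X : Set (EuclideanSpace ℝ (Fin d)), setDist X (∅ : Set _) = 0 :=
      fun X => by simp [setDist]
    have hKU : pK = pU := hpU.2.2 pK (Or.inl hpK.1) (by simp [hz])
    have hMU : pM = pU := hpU.2.2 pM (Or.inr hpM.1) (by simp [hz])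
    have hIU : pI = pU := hpU.2.2 pI (Or.inl hpI.1.1) (by simp [hz])
    constructor
    · simp [hz, hKU, hMU, hIU]
    · intro Q; simp [hz, hKU, hMU, hIU]
  rcases hpU.1 with hK | hM
  · obtain ⟨hdU, hpKU, hdI, hpIM⟩ :=
      main_case hKc.isClosed hUconv hE hEconv hpK hpM hpU hpI hK
    constructor
    · rw [hdU, hdI, hpKU, hpIM]
    · intro Q; rw [hdU, hdI, hpKU, hpIM]
  · have hU' : IsUniqueNearestPoint (M ∪ K) E pU := Set.union_comm K M ▸ hpU
    have hI' : IsUniqueNearestPoint (M ∩ K) E pI := Set.inter_comm K M ▸ hpI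
    obtain ⟨hdU, hpMU, hdI, hpIK⟩ :=
      main_case hMc.isClosed (Set.union_comm K M ▸ hUconv) hE hEconv hpM hpK hU' hI' hM
    have hdU' : setDist (K ∪ M) E = setDist M E := by rw [Set.union_comm]; exact hdU
    have hdI' : setDist (K ∩ M) E = setDist K E := by rw [Set.inter_comm]; exact hdI
    constructor
    · rw [hdU', hdI', hpMU, hpIK]
      exact Multiset.cons_swap _ _ _
    · intro Q; rw [hdU', hdI', hpMU, hpIK]; exact Nat.add_comm _ _
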